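/- Let X be a uniform space, μ a bounded linear functional on U_b(X) represented by integration against a finite nonnegative countably additive measure m on σ(Coz(X)), and suppose X is a uniform D-space. Then for every ε > 0, every uniformly continuous pseudometric d on X, and every pointwise nonincreasing net (g_α) in Lip(d) of nonnegative functions converging pointwise to 0, we have limsup_α μ(g_α) ≤ ε·m(X). In particular lim_α μ(g_α) = 0. -/

import Mathlib

open Filter MeasureTheory Topology Set
open scoped Uniformity ENNReal
set_option linter.unusedSectionVars false
set_option maxHeartbeats 1000000


/-- `d` is a pseudometric on `X`. -/
def IsPseudometric {X : Type*} (d : X → X → ℝ) : Prop :=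
  (∀ x, d x x = 0) ∧ (∀ x y, d x y = d y x) ∧ (∀ x y, 0 ≤ d x y) ∧
    ∀ x y z, d x z ≤ d x y + d y z

/-- `Lip d`: functions bounded by 1 that are 1-Lipschitz for `d`. -/
def Lip {X : Type*} (d : X → X → ℝ) : Set (X → ℝ) :=
  {f | (∀ x, |f x| ≤ 1) ∧ ∀ x x', |f x - f x'| ≤ d x x'}

/-- `U` is open in the (possibly non-Hausdorff) topology induced by the pseudometric `d`. -/
def DOpen {X : Type*} (d : X → X → ℝ) (U : Set X) : Prop :=
  ∀ x ∈ U, ∃ ε > 0, ∀ y, d x y < ε → y ∈ U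

/-- `U` is a cozero set of a bounded uniformly continuous real function on `X`. -/
def IsCozero (X : Type*) [UniformSpace X] (U : Set X) : Prop :=
  ∃ f : X → ℝ, UniformContinuous f ∧ (∃ C, ∀ x, |f x| ≤ C) ∧ U = {x | f x ≠ 0}

/-- The σ-algebra generated by the cozero sets of `X`. -/
def cozMS (X : Type*) [UniformSpace X] : MeasurableSpace X :=
  MeasurableSpace.generateFrom {U | IsCozero X U}

/-- The pseudometric topology of `d` is separable. -/
def DSeparable {X : Type*} (d : X → X → ℝ) : Prop :=
  ∃ D : Set X, D.Countable ∧ ∀ x : X, ∀ ε : ℝ, 0 < ε → ∃ p ∈ D, d x p < ε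

/-- The cardinality of `A` has measure zero: every finite nonnegative countably additive
measure on the power set of `A` vanishing on singletons is zero. -/
def HasMeasureZero (A : Type*) : Prop :=
  ∀ m : @MeasureTheory.Measure A ⊤, @MeasureTheory.IsFiniteMeasure A ⊤ m →
    (∀ a : A, m {a} = 0) → m Set.univ = 0

/-- `Y` is a uniformly discrete subset of the uniform space `X`. -/
def UniformlyDiscrete {X : Type*} [UniformSpace X] (Y : Set X) : Prop :=
  ∃ d : X → X → ℝ, IsPseudometric d ∧ (UniformContinuous fun p : X × X => d p.1 p.2) ∧
    ∃ ε > 0, ∀ y ∈ Y, ∀ y' ∈ Y, y ≠ y' → ε ≤ d y y'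

/-- `X` is a uniform D-space. -/
def IsDSpace (X : Type*) [UniformSpace X] : Prop :=
  ∀ Y : Set X, UniformlyDiscrete Y → HasMeasureZero Y

/-- Distance from a point to a set. -/
noncomputable def distSet {X : Type*} (d : X → X → ℝ) (S : Set X) (x : X) : ℝ :=
  sInf ((d x) '' S)

/-- `fS d S x = min 1 (d(x,S))`, with the convention `fS d ∅ = 1`. -/
noncomputable def fS {X : Type*} (d : X → X → ℝ) (S : Set X) (x : X) : ℝ :=
  @ite _ S.Nonempty (Classical.propDecidable _) (min 1 (distSet d S x)) 1


section DS

variable {X : Type u} [UniformSpace X] {d : X → X → ℝ}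

lemma ds_bddBelow (hd : IsPseudometric d) (S : Set X) (x : X) : BddBelow ((d x) '' S) := by
  refine ⟨0, ?_⟩
  rintro t ⟨v, -, rfl⟩
  exact hd.2.2.1 x v

lemma ds_le (hd : IsPseudometric d) {S : Set X} {v : X} (hv : v ∈ S) (x : X) :
    distSet d S x ≤ d x v :=
  csInf_le (ds_bddBelow hd S x) ⟨v, hv, rfl⟩

lemma ds_nonneg (hd : IsPseudometric d) {S : Set X} (hS : S.Nonempty) (x : X) :
    0 ≤ distSet d S x := by
  refine le_csInf (hS.image _) ?_
  rintro t ⟨v, -, rfl⟩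
  exact hd.2.2.1 x v

lemma ds_lt_iff (hd : IsPseudometric d) {S : Set X} (hS : S.Nonempty) (x : X) {t : ℝ} :
    distSet d S x < t ↔ ∃ v ∈ S, d x v < t := by
  rw [distSet, csInf_lt_iff (ds_bddBelow hd S x) (hS.image _)]
  constructor
  · rintro ⟨_, ⟨v, hv, rfl⟩, h⟩; exact ⟨v, hv, h⟩
  · rintro ⟨v, hv, h⟩; exact ⟨d x v, ⟨v, hv, rfl⟩, h⟩

lemma ds_le_add (hd : IsPseudometric d) {S : Set X} (hS : S.Nonempty) (x x' : X) :
    distSet d S x ≤ d x x' + distSet d S x' := by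
  have h : distSet d S x - d x x' ≤ distSet d S x' := by
    refine le_csInf (hS.image _) ?_
    rintro t ⟨v, hv, rfl⟩
    have h1 := hd.2.2.2 x x' v
    have h2 := ds_le hd hv x
    linarith
  linarith

lemma ds_lip (hd : IsPseudometric d) {S : Set X} (hS : S.Nonempty) (x x' : X) :
    |distSet d S x - distSet d S x'| ≤ d x x' := by
  rw [abs_sub_le_iff]
  constructor
  · have := ds_le_add hd hS x x'; linarith
  · have := ds_le_add hd hS x' x; rw [hd.2.1 x' x] at this; linarith

lemma ds_eq_zero (hd : IsPseudometric d) {S : Set X} {x : X} (hx : x ∈ S) :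
    distSet d S x = 0 := by
  have h1 := ds_le hd hx x
  rw [hd.1] at h1
  exact le_antisymm h1 (ds_nonneg hd ⟨x, hx⟩ x)

/-- Small pseudodistance sets are entourages. -/
lemma dset_mem_unif (hd : IsPseudometric d)
    (hdu : UniformContinuous fun p : X × X => d p.1 p.2) {η : ℝ} (hη : 0 < η) :
    {p : X × X | d p.1 p.2 < η} ∈ 𝓤 X := by
  have h2 : Tendsto (fun q : X × X => ((q.1, q.1), q)) (𝓤 X) (𝓤 (X × X)) := by
    rw [uniformity_prod]
    refine tendsto_inf.2 ⟨tendsto_comap_iff.2 ?_, tendsto_comap_iff.2 ?_⟩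
    · show Tendsto (fun q : X × X => (q.1, q.1)) (𝓤 X) (𝓤 X)
      intro s hs
      rw [mem_map]
      exact mem_of_superset univ_mem
        (fun q _ => show (q.1, q.1) ∈ s from refl_mem_uniformity hs)
    · show Tendsto (fun q : X × X => (q.1, q.2)) (𝓤 X) (𝓤 X)
      exact (tendsto_id : Tendsto id (𝓤 X) (𝓤 X))
  have hdu' : Tendsto (fun p : (X × X) × (X × X) => (d p.1.1 p.1.2, d p.2.1 p.2.2))
      (𝓤 (X × X)) (𝓤 ℝ) := hdu
  have h3 : Tendsto (fun q : X × X => (d q.1 q.1, d q.1 q.2)) (𝓤 X) (𝓤 ℝ) := hdu'.comp h2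
  have h5 := h3 (Metric.dist_mem_uniformity hη)
  refine mem_of_superset h5 ?_
  intro q hq
  simp only [mem_preimage, mem_setOf_eq, Real.dist_eq, hd.1] at hq
  rw [zero_sub, abs_neg, abs_of_nonneg (hd.2.2.1 _ _)] at hq
  exact hq

lemma uc_of_lip (hd : IsPseudometric d)
    (hdu : UniformContinuous fun p : X × X => d p.1 p.2) {f : X → ℝ} {C : ℝ}
    (hf : ∀ x x', |f x - f x'| ≤ C * d x x') : UniformContinuous f := by
  show Tendsto (fun p : X × X => (f p.1, f p.2)) (𝓤 X) (𝓤 ℝ)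
  rw [Metric.uniformity_basis_dist.tendsto_right_iff]
  intro η hη
  have hC1 : (0:ℝ) < |C| + 1 := by positivity
  filter_upwards [dset_mem_unif hd hdu (show (0:ℝ) < η / (|C| + 1) by positivity)] with q hq
  have h1 : |f q.1 - f q.2| ≤ C * d q.1 q.2 := hf _ _
  have h2 : C * d q.1 q.2 ≤ (|C| + 1) * d q.1 q.2 := by
    have := hd.2.2.1 q.1 q.2
    nlinarith [le_abs_self C]
  have h4 : (|C| + 1) * d q.1 q.2 < (|C| + 1) * (η / (|C| + 1)) :=
    mul_lt_mul_of_pos_left hq hC1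
  have h5 : (|C| + 1) * (η / (|C| + 1)) = η := by field_simp
  simp only [mem_setOf_eq, Real.dist_eq]
  linarith

lemma clamp_lip (s t : ℝ) : |max 0 (min s 1) - max 0 (min t 1)| ≤ |s - t| := by
  have h1 : |max (min s 1) 0 - max (min t 1) 0| ≤ |min s 1 - min t 1| :=
    abs_max_sub_max_le_abs _ _ _
  have h2 : |min s 1 - min t 1| ≤ max |s - t| |(1:ℝ) - 1| := abs_min_sub_min_le_max s 1 t 1
  have h3 : max |s - t| |(1:ℝ) - 1| = |s - t| := by simp
  rw [h3] at h2
  rw [max_comm (0:ℝ) (min s 1), max_comm (0:ℝ) (min t 1)]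
  exact h1.trans h2

lemma measurable_of_lip (hd : IsPseudometric d)
    (hdu : UniformContinuous fun p : X × X => d p.1 p.2) {f : X → ℝ} {C : ℝ}
    (hf : ∀ x x', |f x - f x'| ≤ C * d x x') : @Measurable X ℝ (cozMS X) _ f := by
  letI : MeasurableSpace X := cozMS X
  apply measurable_of_Ioi
  intro a
  have hmem : {x | f x - a > 0} ∈ {U | IsCozero X U} := by
    refine ⟨fun x => max 0 (min (f x - a) 1), ?_, ⟨1, ?_⟩, ?_⟩
    · refine uc_of_lip hd hdu (C := C) ?_
      intro x x'
      calc |max 0 (min (f x - a) 1) - max 0 (min (f x' - a) 1)|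
          ≤ |(f x - a) - (f x' - a)| := clamp_lip _ _
        _ = |f x - f x'| := by ring_nf
        _ ≤ C * d x x' := hf x x'
    · intro x
      rw [abs_le]
      constructor
      · have := le_max_left 0 (min (f x - a) 1); linarith
      · exact max_le (by norm_num) (min_le_right _ _)
    · ext x
      simp only [mem_setOf_eq]
      constructor
      · intro h
        have h1 : 0 < min (f x - a) 1 := lt_min h one_pos
        have h2 : 0 < max 0 (min (f x - a) 1) := lt_max_of_lt_right h1
        exact ne_of_gt h2
      · intro h
        have h0 : 0 ≤ max 0 (min (f x - a) 1) := le_max_left _ _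
        have h1 : 0 < max 0 (min (f x - a) 1) := lt_of_le_of_ne h0 (Ne.symm h)
        rcases lt_max_iff.1 h1 with h2 | h2
        · exact absurd h2 (lt_irrefl 0)
        · exact (lt_min_iff.1 h2).1
  have : f ⁻¹' Ioi a = {x | f x - a > 0} := by
    ext x; simp only [mem_preimage, mem_Ioi, mem_setOf_eq]; constructor <;> intro <;> linarith
  rw [this]
  exact MeasurableSpace.measurableSet_generateFrom hmem

end DS

section Bump

variable {X : Type u} [UniformSpace X] {d : X → X → ℝ} {r : ℝ}

/-- A Lipschitz bump function around a set `S`, supported on the `r`-neighborhood of `S`. -/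
noncomputable def bump (d : X → X → ℝ) (r : ℝ) (S : Set X) (x : X) : ℝ :=
  @ite _ S.Nonempty (Classical.propDecidable _) (max 0 (1 - distSet d S x / r)) 0

lemma bump_nonneg (S : Set X) (x : X) : 0 ≤ bump d r S x := by
  rw [bump]; split_ifs
  · exact le_max_left _ _
  · exact le_rfl

lemma bump_le_one (hd : IsPseudometric d) (hr : 0 < r) (S : Set X) (x : X) :
    bump d r S x ≤ 1 := by
  rw [bump]; split_ifs with hS
  · refine max_le (by norm_num) ?_
    have h1 : 0 ≤ distSet d S x / r := div_nonneg (ds_nonneg hd hS x) hr.le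
    linarith
  · norm_num

lemma bump_exists_of_ne (hd : IsPseudometric d) (hr : 0 < r) {S : Set X} {x : X}
    (hne : bump d r S x ≠ 0) : ∃ v ∈ S, d x v < r := by
  rw [bump] at hne
  split_ifs at hne with hS
  · have h0 : 0 ≤ max 0 (1 - distSet d S x / r) := le_max_left _ _
    have h1 : 0 < max 0 (1 - distSet d S x / r) := lt_of_le_of_ne h0 (Ne.symm hne)
    have h2 : 0 < 1 - distSet d S x / r := by
      rcases lt_max_iff.1 h1 with h | h
      · exact absurd h (lt_irrefl 0)
      · exact h
    have h3 : distSet d S x < r := by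
      by_contra hge
      push_neg at hge
      have h4 : (1:ℝ) ≤ distSet d S x / r := (one_le_div hr).2 hge
      linarith
    exact (ds_lt_iff hd hS x).1 h3
  · exact absurd rfl hne

lemma bump_pos (hd : IsPseudometric d) (hr : 0 < r) {S : Set X} {x v : X}
    (hv : v ∈ S) (hxv : d x v < r) : 0 < bump d r S x := by
  rw [bump, if_pos ⟨v, hv⟩]
  have h1 : distSet d S x < r := lt_of_le_of_lt (ds_le hd hv x) hxv
  have h2 : distSet d S x / r < 1 := (div_lt_one hr).2 h1
  exact lt_max_of_lt_right (by linarith)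

lemma bump_eq_one (hd : IsPseudometric d) {S : Set X} {x : X} (hx : x ∈ S) :
    bump d r S x = 1 := by
  rw [bump, if_pos ⟨x, hx⟩, ds_eq_zero hd hx]
  norm_num

lemma bump_measurable (hd : IsPseudometric d)
    (hdu : UniformContinuous fun p : X × X => d p.1 p.2) (hr : 0 < r) (S : Set X) :
    @Measurable X ℝ (cozMS X) _ (bump d r S) := by
  by_cases hS : S.Nonempty
  · have heq : bump d r S = fun x => max 0 (1 - distSet d S x / r) :=
      funext fun x => if_pos hS
    rw [heq]
    refine measurable_of_lip hd hdu (C := 1 / r) ?_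
    intro x x'
    have h1 : |max 0 (1 - distSet d S x / r) - max 0 (1 - distSet d S x' / r)|
        ≤ |(1 - distSet d S x / r) - (1 - distSet d S x' / r)| := by
      rw [max_comm 0 (1 - distSet d S x / r), max_comm 0 (1 - distSet d S x' / r)]
      exact abs_max_sub_max_le_abs _ _ _
    have h2 : (1 - distSet d S x / r) - (1 - distSet d S x' / r)
        = (distSet d S x' - distSet d S x) / r := by ring
    have h3 : |(distSet d S x' - distSet d S x) / r|
        = |distSet d S x' - distSet d S x| / r := by
      rw [abs_div, abs_of_pos hr]
    have h4 := ds_lip hd hS x' x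
    rw [hd.2.1 x' x] at h4
    have h5 : |distSet d S x' - distSet d S x| / r ≤ d x x' / r := by gcongr
    have h6 : d x x' / r = 1 / r * d x x' := by ring
    calc |max 0 (1 - distSet d S x / r) - max 0 (1 - distSet d S x' / r)|
        ≤ |(1 - distSet d S x / r) - (1 - distSet d S x' / r)| := h1
      _ = |(distSet d S x' - distSet d S x) / r| := by rw [h2]
      _ = |distSet d S x' - distSet d S x| / r := h3
      _ ≤ d x x' / r := h5
      _ = 1 / r * d x x' := h6
  · have heq : bump d r S = fun _ => (0 : ℝ) := funext fun x => if_neg hS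
    rw [heq]
    exact measurable_const

end Bump

/-- Key lemma: for a uniformly separated family of sets `W a` indexed by a measure-zero
cardinal, all but countably many of the `W a` lie inside a single `m`-null set. -/
lemma lemB {X : Type u} [UniformSpace X] {d : X → X → ℝ} (hd : IsPseudometric d)
    (hdu : UniformContinuous fun p : X × X => d p.1 p.2)
    (m : @MeasureTheory.Measure X (cozMS X)) (hfin : @MeasureTheory.IsFiniteMeasure X (cozMS X) m)
    {κ : Type w} (hZ : HasMeasureZero κ) (W : κ → Set X) {r s : ℝ} (hr : 0 < r)
    (hrs : 2 * r < s)
    (hsep : ∀ ⦃a b : κ⦄, a ≠ b → ∀ v ∈ W a, ∀ v' ∈ W b, s ≤ d v v') :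
    ∃ C : Set κ, C.Countable ∧ ∃ G : Set X, m G = 0 ∧ ∀ a ∉ C, W a ⊆ G := by
  letI : MeasurableSpace X := cozMS X
  haveI := hfin
  set SU : Set κ → Set X := fun B => ⋃ a ∈ B, W a with hSU
  set h : Set κ → X → ℝ := fun B => bump d r (SU B) with hh
  set Near : Set κ → X → Prop := fun B x => ∃ a ∈ B, ∃ v ∈ W a, d x v < r with hNear
  have huniq : ∀ (x : X) (a b : κ), a ≠ b → ∀ v ∈ W a, d x v < r →
      ∀ v' ∈ W b, d x v' < r → False := by
    intro x a b hab v hv hxv v' hv' hxv'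
    have h1 := hsep hab v hv v' hv'
    have h2 := hd.2.2.2 v x v'
    rw [hd.2.1 v x] at h2
    linarith
  have hmem_SU : ∀ (B : Set κ) (a : κ), a ∈ B → ∀ v ∈ W a, v ∈ SU B := by
    intro B a ha v hv
    exact mem_biUnion ha hv
  have hmem_SU' : ∀ (B : Set κ) (z : X), z ∈ SU B → ∃ a ∈ B, z ∈ W a := by
    intro B z hz
    simpa using mem_iUnion₂.1 hz
  have hSUmono : ∀ {B B' : Set κ}, B ⊆ B' → SU B ⊆ SU B' := by
    intro B B' hBB' z hz
    obtain ⟨a, ha, hza⟩ := hmem_SU' B z hz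
    exact hmem_SU B' a (hBB' ha) z hza
  have hnear_of_ne : ∀ (B : Set κ) (x : X), h B x ≠ 0 → Near B x := by
    intro B x hne
    obtain ⟨v, hvS, hvr⟩ := bump_exists_of_ne hd hr hne
    obtain ⟨a, ha, hva⟩ := hmem_SU' B v hvS
    exact ⟨a, ha, v, hva, hvr⟩
  have hzero : ∀ (B : Set κ) (x : X), ¬ Near B x → h B x = 0 := by
    intro B x hn
    by_contra hne
    exact hn (hnear_of_ne B x hne)
  have hcore : ∀ (B B' : Set κ) (x : X), B ⊆ B' → Near B x → h B' x = h B x := by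
    rintro B B' x hBB' ⟨a, haB, v, hvW, hv⟩
    have hvS : v ∈ SU B := hmem_SU B a haB v hvW
    have hSB : (SU B).Nonempty := ⟨v, hvS⟩
    have hSB' : (SU B').Nonempty := ⟨v, hSUmono hBB' hvS⟩
    have hds : distSet d (SU B') x = distSet d (SU B) x := by
      apply le_antisymm
      · exact csInf_le_csInf (ds_bddBelow hd _ x) (hSB.image _)
          (image_mono (hSUmono hBB'))
      · refine le_csInf (hSB'.image _) ?_
        rintro t ⟨w, hw, rfl⟩
        obtain ⟨a', ha', hwa'⟩ := hmem_SU' B' w hw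
        by_cases hlt : d x w < r
        · rcases eq_or_ne a' a with rfl | hne
          · exact ds_le hd (hmem_SU B a' haB w hwa') x
          · exact absurd (huniq x a a' hne.symm v hvW hv w hwa' hlt) (fun hF => hF)
        · push_neg at hlt
          exact le_trans (le_of_lt (lt_of_le_of_lt (ds_le hd hvS x) hv)) hlt
    show bump d r (SU B') x = bump d r (SU B) x
    rw [bump, bump, if_pos hSB, if_pos hSB', hds]
  have hmono' : ∀ (B B' : Set κ) (x : X), B ⊆ B' → h B x ≤ h B' x := by
    intro B B' x hBB'
    by_cases hn : Near B x
    · rw [hcore B B' x hBB' hn]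
    · rw [hzero B x hn]
      exact bump_nonneg _ _
  have hadd : ∀ (B B' : Set κ), Disjoint B B' → ∀ x, h (B ∪ B') x = h B x + h B' x := by
    intro B B' hdisj x
    by_cases n1 : Near B x <;> by_cases n2 : Near B' x
    · exfalso
      obtain ⟨a, ha, v, hv, hxv⟩ := n1
      obtain ⟨b, hb, v', hv', hxv'⟩ := n2
      have hab : a ≠ b := by
        rintro rfl
        exact (Set.disjoint_left.1 hdisj ha) hb
      exact huniq x a b hab v hv hxv v' hv' hxv'
    · rw [hcore B (B ∪ B') x subset_union_left n1, hzero B' x n2, add_zero]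
    · rw [hcore B' (B ∪ B') x subset_union_right n2, hzero B x n1, zero_add]
    · have hn : ¬ Near (B ∪ B') x := by
        rintro ⟨a, ha, hrest⟩
        rcases (mem_union _ _ _).1 ha with ha' | ha'
        · exact n1 ⟨a, ha', hrest⟩
        · exact n2 ⟨a, ha', hrest⟩
      rw [hzero _ _ hn, hzero B x n1, hzero B' x n2, add_zero]
  have hmeas : ∀ B : Set κ, Measurable (h B) := fun B => bump_measurable hd hdu hr (SU B)
  letI : MeasurableSpace κ := ⊤
  set μfun : Set κ → ℝ≥0∞ := fun B => ∫⁻ x, ENNReal.ofReal (h B x) ∂m with hμfun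
  have hSUempty : SU (∅ : Set κ) = ∅ := by simp [hSU]
  have hempty : μfun ∅ = 0 := by
    have hz : ∀ x, h (∅ : Set κ) x = 0 := by
      intro x
      show bump d r (SU ∅) x = 0
      rw [hSUempty, bump, if_neg (by simp)]
    simp [hμfun, hz]
  have hsigma : ∀ (f : ℕ → Set κ), Pairwise (Function.onFun Disjoint f) →
      μfun (⋃ i, f i) = ∑' i, μfun (f i) := by
    intro f hdisj
    set BK : ℕ → Set κ := fun K => ⋃ k ∈ Finset.range K, f k with hBK
    have hBKmono : ∀ {K K' : ℕ}, K ≤ K' → BK K ⊆ BK K' := by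
      intro K K' hK z hz
      simp only [hBK, mem_iUnion, Finset.mem_range] at hz ⊢
      obtain ⟨k, hk, hzk⟩ := hz
      exact ⟨k, lt_of_lt_of_le hk hK, hzk⟩
    have hBKsubU : ∀ K, BK K ⊆ ⋃ i, f i := by
      intro K z hz
      simp only [hBK, mem_iUnion, Finset.mem_range] at hz
      obtain ⟨k, _, hzk⟩ := hz
      exact mem_iUnion.2 ⟨k, hzk⟩
    have hfinadd : ∀ (K : ℕ) (x : X), h (BK K) x = ∑ k ∈ Finset.range K, h (f k) x := by
      intro K
      induction K with
      | zero =>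
        intro x
        have : BK 0 = ∅ := by simp [hBK]
        rw [this]
        show bump d r (SU ∅) x = _
        rw [hSUempty, bump, if_neg (by simp)]
        simp
      | succ K ih =>
        intro x
        have hBsucc : BK (K + 1) = BK K ∪ f K := by
          ext z
          simp only [hBK, mem_iUnion, Finset.mem_range, mem_union, Nat.lt_succ_iff_lt_or_eq]
          constructor
          · rintro ⟨k, hk | rfl, hz⟩
            exacts [Or.inl ⟨k, hk, hz⟩, Or.inr hz]
          · rintro (⟨k, hk, hz⟩ | hz)
            exacts [⟨k, Or.inl hk, hz⟩, ⟨K, Or.inr rfl, hz⟩]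
        have hdisjK : Disjoint (BK K) (f K) := by
          rw [Set.disjoint_left]
          intro a ha haK
          simp only [hBK, mem_iUnion, Finset.mem_range] at ha
          obtain ⟨k, hk, hak⟩ := ha
          exact (Set.disjoint_left.1 (hdisj (Nat.ne_of_lt hk))) hak haK
        rw [hBsucc, hadd _ _ hdisjK x, ih x, Finset.sum_range_succ]
    have hsup : ∀ x, (⨆ K, ENNReal.ofReal (h (BK K) x)) = ENNReal.ofReal (h (⋃ i, f i) x) := by
      intro x
      by_cases hn : Near (⋃ i, f i) x
      · obtain ⟨a, haU, v, hvW, hv⟩ := hn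
        obtain ⟨k₀, hk₀⟩ := mem_iUnion.1 haU
        have haBK : a ∈ BK (k₀ + 1) := by
          simp only [hBK, mem_iUnion, Finset.mem_range]
          exact ⟨k₀, Nat.lt_succ_self k₀, hk₀⟩
        have heq : h (⋃ i, f i) x = h (BK (k₀ + 1)) x :=
          hcore (BK (k₀ + 1)) (⋃ i, f i) x (hBKsubU _) ⟨a, haBK, v, hvW, hv⟩
        apply le_antisymm
        · exact iSup_le fun K => ENNReal.ofReal_le_ofReal (hmono' _ _ x (hBKsubU K))
        · exact le_iSup_of_le (k₀ + 1) (by rw [← heq])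
      · have hz : ∀ K, h (BK K) x = 0 := by
          intro K
          refine hzero _ _ ?_
          rintro ⟨a, ha, hw⟩
          exact hn ⟨a, hBKsubU K ha, hw⟩
        simp [hz, hzero _ _ hn]
    calc μfun (⋃ i, f i) = ∫⁻ x, ⨆ K, ENNReal.ofReal (h (BK K) x) ∂m := by
          simp only [hμfun]
          congr 1
          funext x
          rw [hsup x]
      _ = ⨆ K, ∫⁻ x, ENNReal.ofReal (h (BK K) x) ∂m := by
          refine lintegral_iSup (fun K => (hmeas _).ennreal_ofReal) ?_
          intro K K' hK x
          exact ENNReal.ofReal_le_ofReal (hmono' _ _ x (hBKmono hK))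
      _ = ⨆ K, ∑ k ∈ Finset.range K, μfun (f k) := by
          congr 1
          funext K
          have : (fun x => ENNReal.ofReal (h (BK K) x))
              = fun x => ∑ k ∈ Finset.range K, ENNReal.ofReal (h (f k) x) := by
            funext x
            rw [hfinadd K x, ENNReal.ofReal_sum_of_nonneg (fun k _ => bump_nonneg _ _)]
          rw [this]
          exact lintegral_finset_sum _ (fun k _ => (hmeas _).ennreal_ofReal)
      _ = ∑' k, μfun (f k) := ENNReal.tsum_eq_iSup_nat.symm
  set μ : Measure κ := Measure.ofMeasurable (fun B _ => μfun B) hempty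
    (fun f _ hdisj => hsigma f hdisj) with hμ
  have hμapp : ∀ B : Set κ, μ B = μfun B := fun B =>
    Measure.ofMeasurable_apply B trivial
  haveI hμfin : IsFiniteMeasure μ := by
    constructor
    rw [hμapp]
    calc μfun univ ≤ ∫⁻ _x, 1 ∂m :=
          lintegral_mono fun x => ENNReal.ofReal_le_one.2 (bump_le_one hd hr _ x)
      _ = m univ := lintegral_one
      _ < ⊤ := measure_lt_top m univ
  set Vp : κ → Set X := fun a => {x | h {a} x ≠ 0} with hVp
  have hVpm : ∀ a, MeasurableSet (Vp a) := fun a =>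
    (hmeas {a}) (measurableSet_singleton (0:ℝ)).compl
  have hVpd : Pairwise (Function.onFun Disjoint Vp) := by
    intro a b hab
    rw [Function.onFun, Set.disjoint_left]
    intro x hxa hxb
    obtain ⟨a', ha', v, hv, hxv⟩ := hnear_of_ne _ _ hxa
    obtain ⟨b', hb', v', hv', hxv'⟩ := hnear_of_ne _ _ hxb
    rw [mem_singleton_iff] at ha' hb'
    subst ha'; subst hb'
    exact huniq x a' b' hab v hv hxv v' hv' hxv'
  set C : Set κ := {a | 0 < m (Vp a)} with hC
  have hCc : C.Countable :=
    Measure.countable_meas_pos_of_disjoint_iUnion (μ := m) hVpm hVpd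
  set ν : Measure κ := μ.restrict Cᶜ with hν
  have hsingl : ∀ a : κ, ν {a} = 0 := by
    intro a
    rw [hν, Measure.restrict_apply MeasurableSpace.measurableSet_top]
    by_cases haC : a ∈ C
    · have he : ({a} : Set κ) ∩ Cᶜ = ∅ := by
        ext z
        simp only [mem_inter_iff, mem_singleton_iff, mem_compl_iff, mem_empty_iff_false,
          iff_false, not_and]
        rintro rfl
        simpa using haC
      rw [he]
      exact measure_empty
    · have he : ({a} : Set κ) ∩ Cᶜ = {a} :=
        inter_eq_self_of_subset_left (singleton_subset_iff.2 haC)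
      rw [he, hμapp]
      have hb : ∀ x, ENNReal.ofReal (h {a} x) ≤ (Vp a).indicator (fun _ => 1) x := by
        intro x
        by_cases hx : h {a} x = 0
        · simp [hx]
        · have hxm : x ∈ Vp a := hx
          rw [indicator_of_mem hxm]
          exact ENNReal.ofReal_le_one.2 (bump_le_one hd hr _ x)
      have hVp0 : m (Vp a) = 0 := le_zero_iff.1 (not_lt.1 haC)
      have hle : μfun {a} ≤ 0 :=
        calc μfun {a} ≤ ∫⁻ x, (Vp a).indicator (fun _ => 1) x ∂m := lintegral_mono hb
          _ = m (Vp a) := lintegral_indicator_one (hVpm a)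
          _ = 0 := hVp0
      exact le_antisymm hle zero_le
  have hν0 : ν univ = 0 := hZ ν inferInstance hsingl
  have hμC : μ Cᶜ = 0 := by
    rw [hν, Measure.restrict_apply MeasurableSpace.measurableSet_top, univ_inter] at hν0
    exact hν0
  rw [hμapp] at hμC
  have hae := (lintegral_eq_zero_iff ((hmeas Cᶜ).ennreal_ofReal)).1 hμC
  have hGnull : m {x | h Cᶜ x ≠ 0} = 0 := by
    have h1 : m {x | ¬ (ENNReal.ofReal (h Cᶜ x) = 0)} = 0 := by
      rw [Filter.EventuallyEq, ae_iff] at hae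
      simpa using hae
    refine measure_mono_null ?_ h1
    intro x hx
    simp only [mem_setOf_eq] at hx ⊢
    intro hc
    exact hx (le_antisymm (ENNReal.ofReal_eq_zero.1 hc) (bump_nonneg _ _))
  refine ⟨C, hCc, {x | h Cᶜ x ≠ 0}, hGnull, ?_⟩
  intro a haC x hxW
  show h Cᶜ x ≠ 0
  have hx : x ∈ SU Cᶜ := hmem_SU _ a haC x hxW
  show bump d r (SU Cᶜ) x ≠ 0
  rw [bump_eq_one hd hx]
  exact one_ne_zero

/-- On a D-space, every finite measure on the cozero σ-algebra almost-concentrates on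
the `ρ`-neighborhood of a countable set, for every uniformly continuous pseudometric. -/
lemma lemA {X : Type u} [UniformSpace X] (hD : IsDSpace X)
    (m : @MeasureTheory.Measure X (cozMS X)) (hfin : @MeasureTheory.IsFiniteMeasure X (cozMS X) m)
    {d : X → X → ℝ} (hd : IsPseudometric d)
    (hdu : UniformContinuous fun p : X × X => d p.1 p.2) {ρ : ℝ} (hρ : 0 < ρ) :
    ∃ D : Set X, D.Countable ∧ m {x | ¬ ∃ p ∈ D, d x p < ρ} = 0 := by
  have hchains : ∀ c ⊆ {Z : Set X | ∀ y ∈ Z, ∀ y' ∈ Z, y ≠ y' → ρ/2 ≤ d y y'},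
      IsChain (· ⊆ ·) c → ∃ ub ∈ {Z : Set X | ∀ y ∈ Z, ∀ y' ∈ Z, y ≠ y' → ρ/2 ≤ d y y'},
        ∀ s ∈ c, s ⊆ ub := by
    intro c hcS hchain
    refine ⟨⋃₀ c, ?_, fun t ht => subset_sUnion_of_mem ht⟩
    intro y hy y' hy' hne
    obtain ⟨t, htc, hyt⟩ := hy
    obtain ⟨t', ht'c, hy't'⟩ := hy'
    rcases eq_or_ne t t' with rfl | htt
    · exact hcS htc y hyt y' hy't' hne
    · rcases hchain htc ht'c htt with hsub | hsub
      · exact hcS ht'c y (hsub hyt) y' hy't' hne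
      · exact hcS htc y hyt y' (hsub hy't') hne
  obtain ⟨Y, hY⟩ := zorn_subset _ hchains
  have hcov0 : ∀ x : X, ∃ y ∈ Y, d x y < ρ/2 := by
    intro x
    by_contra hfar
    push_neg at hfar
    have hxY : x ∉ Y := by
      intro hxY
      have := hfar x hxY
      rw [hd.1] at this
      linarith
    have hins : insert x Y ∈ {Z : Set X | ∀ y ∈ Z, ∀ y' ∈ Z, y ≠ y' → ρ/2 ≤ d y y'} := by
      intro y hy y' hy' hne
      rcases hy with rfl | hy <;> rcases hy' with rfl | hy'
      · exact absurd rfl hne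
      · exact hfar y' hy'
      · rw [hd.2.1]; exact hfar y hy
      · exact hY.1 y hy y' hy' hne
    have hsub := hY.2 hins (subset_insert x Y)
    exact hxY (hsub (mem_insert x Y))
  set V : ℕ → ↥Y → Set X := fun n y =>
    {x | d x ↑y < ρ/2 - ρ/2^n ∧
      ∀ y' : ↥Y, WellOrderingRel y' y → ρ/2 - ρ/2^(n+1) ≤ d x ↑y'} with hV
  have hpow : ∀ n : ℕ, (0:ℝ) < ρ/2^n := fun n => by positivity
  have hcov : ∀ x : X, ∃ n y, x ∈ V n y := by
    intro x
    have hT : {y : ↥Y | d x ↑y < ρ/2}.Nonempty := by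
      obtain ⟨y, hy, hxy⟩ := hcov0 x
      exact ⟨⟨y, hy⟩, hxy⟩
    set y₀ := (IsWellFounded.wf (r := WellOrderingRel (α := ↥Y))).min _ hT with hy₀
    have hy₀T : d x ↑y₀ < ρ/2 :=
      (IsWellFounded.wf (r := WellOrderingRel (α := ↥Y))).min_mem _ hT
    obtain ⟨n, hn⟩ : ∃ n : ℕ, ρ/2^n < ρ/2 - d x ↑y₀ := by
      have hpos : (0:ℝ) < (ρ/2 - d x ↑y₀)/ρ := by
        apply div_pos _ hρ
        linarith
      obtain ⟨n, hn⟩ := exists_pow_lt_of_lt_one hpos (show (1:ℝ)/2 < 1 by norm_num)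
      refine ⟨n, ?_⟩
      have := mul_lt_mul_of_pos_left hn hρ
      rw [mul_div_cancel₀ _ (ne_of_gt hρ)] at this
      calc ρ/2^n = ρ * ((1:ℝ)/2)^n := by rw [div_pow, one_pow]; ring
        _ < ρ/2 - d x ↑y₀ := this
    refine ⟨n, y₀, ?_, ?_⟩
    · show d x ↑y₀ < ρ/2 - ρ/2^n
      linarith
    · intro y' hy'
      by_contra hlt
      push_neg at hlt
      have hmem : y' ∈ {y : ↥Y | d x ↑y < ρ/2} := by
        have := hpow (n+1)
        simp only [mem_setOf_eq]
        linarith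
      exact (IsWellFounded.wf (r := WellOrderingRel (α := ↥Y))).not_lt_min _ hmem hy'
  have hsepV : ∀ (n : ℕ) ⦃a b : ↥Y⦄, a ≠ b →
      ∀ v ∈ V n a, ∀ v' ∈ V n b, ρ/2^(n+1) ≤ d v v' := by
    intro n a b hab v hv v' hv'
    have hhalf : ρ/2^n = 2 * (ρ/2^(n+1)) := by
      rw [pow_succ]; ring
    rcases trichotomous_of WellOrderingRel a b with hrel | heq | hrel
    · have h1 := hv'.2 a hrel
      have h2 := hv.1
      have h3 := hd.2.2.2 v' v (↑a)
      have h4 : d v' v = d v v' := hd.2.1 v' v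
      linarith
    · exact absurd heq hab
    · have h1 := hv.2 b hrel
      have h2 := hv'.1
      have h3 := hd.2.2.2 v v' (↑b)
      linarith
  have hZY : HasMeasureZero ↥Y :=
    hD Y ⟨d, hd, hdu, ρ/2, by positivity, fun y hy y' hy' hne => hY.1 y hy y' hy' hne⟩
  have hlem : ∀ n : ℕ, ∃ C : Set ↥Y, C.Countable ∧
      ∃ G : Set X, m G = 0 ∧ ∀ a ∉ C, V n a ⊆ G := by
    intro n
    refine lemB hd hdu m hfin hZY (V n) (r := ρ/2^(n+1)/3) (s := ρ/2^(n+1))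
      (by positivity) (by have := hpow (n+1); linarith) (hsepV n)
  choose C hCc G hG0 hWG using hlem
  refine ⟨⋃ n, (fun y : ↥Y => (y : X)) '' C n,
    countable_iUnion (fun n => (hCc n).image _), ?_⟩
  refine measure_mono_null ?_ (measure_iUnion_null hG0)
  intro x hx
  simp only [mem_setOf_eq] at hx
  push_neg at hx
  obtain ⟨n, y, hxV⟩ := hcov x
  by_cases hyC : y ∈ C n
  · exfalso
    have hpD : (y:X) ∈ ⋃ n, (fun y : ↥Y => (y : X)) '' C n :=
      mem_iUnion.2 ⟨n, mem_image_of_mem _ hyC⟩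
    have h1 := hx _ hpD
    have h2 := hxV.1
    have h3 := hpow n
    linarith
  · exact mem_iUnion.2 ⟨n, hWG n y hyC hxV⟩

/-- on a uniform D-space, for a nonincreasing nonnegative net in `Lip d`
tending pointwise to 0, `limsup_α ∫ g_α dm ≤ ε·m(X)` for every `ε > 0`; in particular
`∫ g_α dm → 0`. -/
theorem dspace_limsup_bound {X : Type u} [UniformSpace X] (hD : IsDSpace X)
    (m : @MeasureTheory.Measure X (cozMS X))
    (hfin : @MeasureTheory.IsFiniteMeasure X (cozMS X) m)
    (d : X → X → ℝ) (hd : IsPseudometric d)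
    (hdu : UniformContinuous fun p : X × X => d p.1 p.2)
    (ι : Type v) [Preorder ι] [IsDirected ι (· ≤ ·)] [Nonempty ι]
    (g : ι → X → ℝ) (hg : ∀ i, g i ∈ Lip d) (hpos : ∀ i x, 0 ≤ g i x)
    (hmono : ∀ i j, i ≤ j → ∀ x, g j x ≤ g i x)
    (h0 : ∀ x, Tendsto (fun i => g i x) atTop (𝓝 0)) :
    (∀ ε : ℝ, 0 < ε →
      Filter.limsup (fun i => ∫ x, g i x ∂m) atTop ≤ ε * (m Set.univ).toReal) ∧
    Tendsto (fun i => ∫ x, g i x ∂m) atTop (𝓝 0) := by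
  letI : MeasurableSpace X := cozMS X
  haveI := hfin
  haveI : (atTop : Filter ι).NeBot := atTop_neBot
  set c : ℝ := (m Set.univ).toReal with hc
  have hc0 : 0 ≤ c := ENNReal.toReal_nonneg
  set I : ι → ℝ := fun i => ∫ x, g i x ∂m with hI
  have hgmeas : ∀ i, Measurable (g i) := fun i =>
    measurable_of_lip hd hdu (C := 1) (fun x x' => by
      simpa using (hg i).2 x x')
  have hint : ∀ i, Integrable (g i) m := by
    intro i
    refine Integrable.mono' (integrable_const (1:ℝ)) (hgmeas i).aestronglyMeasurable ?_
    exact Filter.Eventually.of_forall fun x => by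
      rw [Real.norm_eq_abs]; exact (hg i).1 x
  have hI0 : ∀ i, 0 ≤ I i := fun i => integral_nonneg (hpos i)
  have hIc : ∀ i, I i ≤ c := by
    intro i
    calc I i ≤ ∫ _x, (1:ℝ) ∂m :=
          integral_mono (hint i) (integrable_const 1)
            (fun x => (abs_le.1 ((hg i).1 x)).2)
      _ = c := by rw [integral_const, smul_eq_mul, mul_one]; rfl
  have hIbddAbove : IsBoundedUnder (· ≤ ·) (atTop : Filter ι) I :=
    isBoundedUnder_of ⟨c, fun i => hIc i⟩
  have hIcobdd : IsCoboundedUnder (· ≤ ·) (atTop : Filter ι) I :=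
    (isBoundedUnder_of ⟨0, fun i => hI0 i⟩ :
      IsBoundedUnder (· ≥ ·) (atTop : Filter ι) I).isCoboundedUnder_le
  have P1 : ∀ ε : ℝ, 0 < ε → Filter.limsup I atTop ≤ ε * c := by
    intro ε hε
    by_cases hm0 : m Set.univ = 0
    · have hmz : m = 0 := by
        ext t _
        exact le_antisymm (le_trans (measure_mono (subset_univ t)) (le_of_eq hm0)) zero_le
      have hIz : I = fun _ => (0:ℝ) := by
        funext i
        rw [hI]
        simp [hmz]
      rw [hIz, limsup_const]
      positivity
    · -- X is nonempty
      have hXne : Nonempty X := by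
        by_contra hX
        rw [not_nonempty_iff] at hX
        refine hm0 ?_
        have huniv : (Set.univ : Set X) = ∅ := Set.univ_eq_empty_iff.2 hX
        rw [huniv]
        exact measure_empty
      obtain ⟨x₀⟩ := hXne
      obtain ⟨D, hDc, hDnull⟩ := lemA hD m hfin hd hdu hε
      -- enumerate D ∪ {x₀}
      obtain ⟨pfun, hpfun⟩ : ∃ pfun : ℕ → X, D ⊆ Set.range pfun := by
        rcases Set.eq_empty_or_nonempty D with rfl | hDne
        · exact ⟨fun _ => x₀, empty_subset _⟩
        · obtain ⟨f, hf⟩ := hDc.exists_eq_range hDne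
          exact ⟨f, hf.le⟩
      set A : ℕ → Set X := fun j => {x | d x (pfun j) < ε} with hA
      have hAmeas : ∀ j, MeasurableSet (A j) := by
        intro j
        have hmf : Measurable (fun x => d x (pfun j)) := by
          refine measurable_of_lip hd hdu (C := 1) ?_
          intro x x'
          rw [one_mul, abs_sub_le_iff]
          constructor
          · have h1 := hd.2.2.2 x x' (pfun j)
            linarith
          · have h1 := hd.2.2.2 x' x (pfun j)
            rw [hd.2.1 x' x] at h1
            linarith
        exact hmf measurableSet_Iio
      set BK : ℕ → Set X := fun k => ⋃ j ∈ Finset.range (k+1), A j with hBK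
      have hBKmeas : ∀ k, MeasurableSet (BK k) :=
        fun k => (Finset.range (k+1)).measurableSet_biUnion (fun j _ => hAmeas j)
      have hBKmono : Monotone BK := by
        intro k k' hk z hz
        simp only [hBK, mem_iUnion, Finset.mem_range] at hz ⊢
        obtain ⟨j, hj, hzj⟩ := hz
        exact ⟨j, lt_of_lt_of_le hj (by omega), hzj⟩
      have hBKunion : (⋃ k, BK k) = ⋃ j, A j := by
        ext z
        simp only [hBK, mem_iUnion, Finset.mem_range]
        constructor
        · rintro ⟨k, j, _, hz⟩
          exact ⟨j, hz⟩
        · rintro ⟨j, hz⟩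
          exact ⟨j, j, by omega, hz⟩
      have hcompl_null : m ((⋃ j, A j)ᶜ) = 0 := by
        refine measure_mono_null ?_ hDnull
        intro z hz
        simp only [mem_compl_iff, mem_iUnion, not_exists, hA, mem_setOf_eq] at hz
        simp only [mem_setOf_eq]
        rintro ⟨p, hpD, hp⟩
        obtain ⟨j, rfl⟩ := hpfun hpD
        exact hz j hp
      -- choose the subsequence
      have hpick : ∀ k : ℕ, ∃ i : ι, ∀ j ≤ k, g i (pfun j) ≤ 1/(k+1) := by
        intro k
        classical
        have hj : ∀ j : ℕ, ∃ i, g i (pfun j) ≤ 1/((k:ℝ)+1) := by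
          intro j
          have hev : ∀ᶠ i in (atTop : Filter ι), g i (pfun j) < 1/((k:ℝ)+1) :=
            (h0 (pfun j)).eventually_lt_const (by positivity)
          obtain ⟨i, hi⟩ := hev.exists
          exact ⟨i, hi.le⟩
        choose iF hiF using hj
        obtain ⟨M, hM⟩ := Finset.exists_le ((Finset.range (k+1)).image iF)
        refine ⟨M, fun j hjk => ?_⟩
        have hjM : iF j ≤ M :=
          hM _ (Finset.mem_image_of_mem iF (Finset.mem_range.2 (by omega)))
        exact le_trans (hmono (iF j) M hjM (pfun j)) (hiF j)
      choose iseq hiseq using hpick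
      -- limsup I ≤ I (iseq k) ≤ R k
      have hRk : ∀ k : ℕ, Filter.limsup I atTop ≤
          (ε + 1/((k:ℝ)+1)) * c + (m (BK k)ᶜ).toReal := by
        intro k
        have hls : Filter.limsup I atTop ≤ I (iseq k) := by
          refine limsup_le_of_le hIcobdd ?_
          filter_upwards [eventually_ge_atTop (iseq k)] with i hi
          exact integral_mono (hint i) (hint (iseq k)) (hmono (iseq k) i hi)
        refine le_trans hls ?_
        have hsplit : I (iseq k) = (∫ x in BK k, g (iseq k) x ∂m)
            + ∫ x in (BK k)ᶜ, g (iseq k) x ∂m :=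
          (integral_add_compl (hBKmeas k) (hint (iseq k))).symm
        have hb1 : (∫ x in BK k, g (iseq k) x ∂m) ≤ (ε + 1/((k:ℝ)+1)) * c := by
          have hpt : ∀ x ∈ BK k, g (iseq k) x ≤ ε + 1/((k:ℝ)+1) := by
            intro x hx
            simp only [hBK, mem_iUnion, Finset.mem_range] at hx
            obtain ⟨j, hj, hxj⟩ := hx
            have hxj' : d x (pfun j) < ε := hxj
            have hlip := (hg (iseq k)).2 x (pfun j)
            have hsmall := hiseq k j (by omega)
            have := abs_le.1 hlip
            linarith [this.2]
          calc (∫ x in BK k, g (iseq k) x ∂m)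
              ≤ ∫ _x in BK k, (ε + 1/((k:ℝ)+1)) ∂m :=
                setIntegral_mono_on (hint (iseq k)).integrableOn
                  (integrableOn_const (measure_ne_top m _)) (hBKmeas k) hpt
            _ = (m (BK k)).toReal * (ε + 1/((k:ℝ)+1)) := by
                rw [setIntegral_const, smul_eq_mul]; rfl
            _ ≤ c * (ε + 1/((k:ℝ)+1)) := by
                have h1 : (m (BK k)).toReal ≤ c :=
                  ENNReal.toReal_mono (measure_ne_top m _) (measure_mono (subset_univ _))
                have h2 : (0:ℝ) ≤ ε + 1/((k:ℝ)+1) := by positivity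
                nlinarith
            _ = (ε + 1/((k:ℝ)+1)) * c := mul_comm _ _
        have hb2 : (∫ x in (BK k)ᶜ, g (iseq k) x ∂m) ≤ (m (BK k)ᶜ).toReal := by
          calc (∫ x in (BK k)ᶜ, g (iseq k) x ∂m)
              ≤ ∫ _x in (BK k)ᶜ, (1:ℝ) ∂m :=
                setIntegral_mono_on (hint (iseq k)).integrableOn
                  (integrableOn_const (measure_ne_top m _)) (hBKmeas k).compl
                  (fun x _ => (abs_le.1 ((hg (iseq k)).1 x)).2)
            _ = (m (BK k)ᶜ).toReal := by rw [setIntegral_const, smul_eq_mul, mul_one]; rfl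
        rw [hI] at hsplit ⊢
        rw [hsplit]
        exact add_le_add hb1 hb2
      have htail : Tendsto (fun k : ℕ => (m ((BK k)ᶜ)).toReal) atTop (𝓝 0) := by
        have h1 : Tendsto (fun k : ℕ => m ((BK k)ᶜ)) atTop (𝓝 (m (⋂ k, (BK k)ᶜ))) :=
          tendsto_measure_iInter_atTop (fun k => (hBKmeas k).compl.nullMeasurableSet)
            (fun k k' hk => compl_subset_compl.2 (hBKmono hk)) ⟨0, measure_ne_top m _⟩
        have h2 : m (⋂ k, (BK k)ᶜ) = 0 := by
          rw [show (⋂ k, (BK k)ᶜ) = (⋃ k, BK k)ᶜ from (compl_iUnion _).symm, hBKunion]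
          exact hcompl_null
        rw [h2] at h1
        have h3 := (ENNReal.tendsto_toReal (by simp : (0:ℝ≥0∞) ≠ ⊤)).comp h1
        simpa [Function.comp_def] using h3
      have hR : Tendsto (fun k : ℕ => (ε + 1/((k:ℝ)+1)) * c + (m ((BK k)ᶜ)).toReal)
          atTop (𝓝 (ε * c)) := by
        have h1 : Tendsto (fun k : ℕ => ε + 1/((k:ℝ)+1)) atTop (𝓝 ε) := by
          have h0' := tendsto_one_div_add_atTop_nhds_zero_nat (𝕜 := ℝ)
          simpa using (tendsto_const_nhds (x := ε)).add h0'
        have h2 := (h1.mul (tendsto_const_nhds (x := c))).add htail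
        simpa using h2
      exact ge_of_tendsto' hR hRk
  refine ⟨P1, ?_⟩
  rw [tendsto_order]
  constructor
  · intro a ha
    exact Filter.Eventually.of_forall fun i => lt_of_lt_of_le ha (hI0 i)
  · intro b hb
    have hε : (0:ℝ) < b/(2*(c+1)) := by positivity
    have h1 := P1 _ hε
    have h2 : b/(2*(c+1)) * c < b := by
      rw [div_mul_eq_mul_div, div_lt_iff₀ (by positivity)]
      nlinarith
    exact eventually_lt_of_limsup_lt (lt_of_le_of_lt h1 h2) hIbddAbove
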